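/- The environment-worst-case risk of a linear predictor h(x) = a·X_C + b·X_S under sign-flipping spurious correlation equals (a−c)²·Var(X_C) + (1+|b|)²·Var(X_S) + σ², and is uniquely minimized over (a,b) at (c, 0). -/

import Mathlib

open MeasureTheory ProbabilityTheory

/-- **Worst-case risk formula and unique minimizer.**
In the sign-flipping SCM (`X_C, X_S, ε` independent mean-zero with variances
`v_C > 0`, `v_S > 0`, `σ²`; `Y_e = c·X_C + s_e·X_S + ε`, `s_e ∈ {±1}`), the
environment-worst-case risk of `h(x) = a·X_C + b·X_S` equals
`(a−c)²·v_C + (1+|b|)²·v_S + σ²`, and it is uniquely minimized at `(a,b) = (c,0)`. -/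
theorem stmt8 {Ω : Type*} [MeasurableSpace Ω] (μ : Measure Ω) [IsProbabilityMeasure μ]
    (XC XS ε : Ω → ℝ) (c : ℝ)
    (hIndep : iIndepFun ![XC, XS, ε] μ)
    (hCm : Measurable XC) (hSm : Measurable XS) (hεm : Measurable ε)
    (hC2 : MemLp XC 2 μ) (hS2 : MemLp XS 2 μ) (hε2 : MemLp ε 2 μ)
    (hCmean : ∫ ω, XC ω ∂μ = 0) (hSmean : ∫ ω, XS ω ∂μ = 0) (hεmean : ∫ ω, ε ω ∂μ = 0)
    (hVarC : 0 < variance XC μ) (hVarS : 0 < variance XS μ)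
    (R : ℝ → ℝ → ℝ → ℝ)
    (hR : R = fun se a b =>
      ∫ ω, (c * XC ω + se * XS ω + ε ω - (a * XC ω + b * XS ω)) ^ 2 ∂μ) :
    (∀ a b : ℝ, max (R 1 a b) (R (-1) a b)
        = (a - c) ^ 2 * variance XC μ + (1 + |b|) ^ 2 * variance XS μ + variance ε μ) ∧
    (∀ a b : ℝ, max (R 1 c 0) (R (-1) c 0) ≤ max (R 1 a b) (R (-1) a b)) ∧
    (∀ a b : ℝ, max (R 1 a b) (R (-1) a b) = max (R 1 c 0) (R (-1) c 0) →
      a = c ∧ b = 0) := by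
  -- integrability
  have hCi : Integrable XC μ := hC2.integrable one_le_two
  have hSi : Integrable XS μ := hS2.integrable one_le_two
  have hεi : Integrable ε μ := hε2.integrable one_le_two
  have hC2i : Integrable (fun ω => XC ω ^ 2) μ := hC2.integrable_sq
  have hS2i : Integrable (fun ω => XS ω ^ 2) μ := hS2.integrable_sq
  have hε2i : Integrable (fun ω => ε ω ^ 2) μ := hε2.integrable_sq
  -- pairwise independence
  have iCS : IndepFun XC XS μ := by
    have := hIndep.indepFun (show (0 : Fin 3) ≠ 1 by decide); simpa using this
  have iCε : IndepFun XC ε μ := by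
    have := hIndep.indepFun (show (0 : Fin 3) ≠ 2 by decide); simpa using this
  have iSε : IndepFun XS ε μ := by
    have := hIndep.indepFun (show (1 : Fin 3) ≠ 2 by decide); simpa using this
  have eCS : ∫ ω, XC ω * XS ω ∂μ = 0 := by
    have := iCS.integral_fun_mul_eq_mul_integral hCi.1 hSi.1
    simpa [hCmean, hSmean] using this
  have eCε : ∫ ω, XC ω * ε ω ∂μ = 0 := by
    have := iCε.integral_fun_mul_eq_mul_integral hCi.1 hεi.1
    simpa [hCmean, hεmean] using this
  have eSε : ∫ ω, XS ω * ε ω ∂μ = 0 := by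
    have := iSε.integral_fun_mul_eq_mul_integral hSi.1 hεi.1
    simpa [hSmean, hεmean] using this
  have iCSi : Integrable (fun ω => XC ω * XS ω) μ := iCS.integrable_mul hCi hSi
  have iCεi : Integrable (fun ω => XC ω * ε ω) μ := iCε.integrable_mul hCi hεi
  have iSεi : Integrable (fun ω => XS ω * ε ω) μ := iSε.integrable_mul hSi hεi
  -- variances
  have vC : variance XC μ = ∫ ω, XC ω ^ 2 ∂μ := by
    rw [variance_eq_sub hC2]; simp [hCmean]
  have vS : variance XS μ = ∫ ω, XS ω ^ 2 ∂μ := by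
    rw [variance_eq_sub hS2]; simp [hSmean]
  have vε : variance ε μ = ∫ ω, ε ω ^ 2 ∂μ := by
    rw [variance_eq_sub hε2]; simp [hεmean]
  -- key risk formula
  have key : ∀ p q : ℝ, ∫ ω, (p * XC ω + q * XS ω + ε ω) ^ 2 ∂μ
      = p ^ 2 * variance XC μ + q ^ 2 * variance XS μ + variance ε μ := by
    intro p q
    have hfun : (fun ω => (p * XC ω + q * XS ω + ε ω) ^ 2)
        = fun ω => p ^ 2 * XC ω ^ 2 + q ^ 2 * XS ω ^ 2 + ε ω ^ 2
          + (2 * p * q) * (XC ω * XS ω) + (2 * p) * (XC ω * ε ω)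
          + (2 * q) * (XS ω * ε ω) := by
      funext ω; ring
    rw [hfun]
    rw [integral_add, integral_add, integral_add, integral_add, integral_add]
    · rw [integral_const_mul, integral_const_mul, integral_const_mul, integral_const_mul,
        integral_const_mul, eCS, eCε, eSε, vC, vS, vε]
      ring
    · exact hC2i.const_mul _
    · exact hS2i.const_mul _
    · exact (hC2i.const_mul _).add (hS2i.const_mul _)
    · exact hε2i
    · exact ((hC2i.const_mul _).add (hS2i.const_mul _)).add hε2i
    · exact iCSi.const_mul _
    · exact (((hC2i.const_mul _).add (hS2i.const_mul _)).add hε2i).add (iCSi.const_mul _)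
    · exact iCεi.const_mul _
    · exact ((((hC2i.const_mul _).add (hS2i.const_mul _)).add hε2i).add
        (iCSi.const_mul _)).add (iCεi.const_mul _)
    · exact iSεi.const_mul _
  have hRval : ∀ se a b : ℝ, R se a b
      = (a - c) ^ 2 * variance XC μ + (se - b) ^ 2 * variance XS μ + variance ε μ := by
    intro se a b
    have : R se a b = ∫ ω, ((c - a) * XC ω + (se - b) * XS ω + ε ω) ^ 2 ∂μ := by
      rw [hR]
      show (∫ ω, (c * XC ω + se * XS ω + ε ω - (a * XC ω + b * XS ω)) ^ 2 ∂μ) = _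
      congr 1; funext ω; ring
    rw [this, key]; ring_nf
  -- part 1
  have part1 : ∀ a b : ℝ, max (R 1 a b) (R (-1) a b)
      = (a - c) ^ 2 * variance XC μ + (1 + |b|) ^ 2 * variance XS μ + variance ε μ := by
    intro a b
    rw [hRval 1 a b, hRval (-1) a b]
    rcases le_or_gt 0 b with hb | hb
    · rw [max_eq_right, abs_of_nonneg hb]
      · ring_nf
      · nlinarith [hVarS]
    · rw [max_eq_left, abs_of_neg hb]
      · ring_nf
      · nlinarith [hVarS]
  refine ⟨part1, ?_, ?_⟩
  · intro a b
    rw [part1, part1]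
    have h1 : (0:ℝ) ≤ |b| := abs_nonneg b
    have h2 : (1:ℝ) ≤ (1 + |b|) ^ 2 := by nlinarith
    simp only [sub_self, abs_zero]
    nlinarith [mul_nonneg (sq_nonneg (a - c)) hVarC.le,
      mul_le_mul_of_nonneg_right h2 hVarS.le]
  · intro a b h
    rw [part1, part1] at h
    simp only [sub_self, abs_zero] at h
    have h1 : (0:ℝ) ≤ |b| := abs_nonneg b
    have h2 : (1:ℝ) ≤ (1 + |b|) ^ 2 := by nlinarith
    have h2' : (1:ℝ) * variance XS μ ≤ (1 + |b|) ^ 2 * variance XS μ :=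
      mul_le_mul_of_nonneg_right h2 hVarS.le
    have h4 : (0:ℝ) ≤ (a - c) ^ 2 * variance XC μ :=
      mul_nonneg (sq_nonneg _) hVarC.le
    have h5 : (a - c) ^ 2 * variance XC μ = 0 := by nlinarith
    have ha : a = c := by
      rcases mul_eq_zero.mp h5 with h6 | h6
      · have := pow_eq_zero_iff (n := 2) (by norm_num) |>.mp h6
        linarith [sub_eq_zero.mp this]
      · exact absurd h6 hVarC.ne'
    have h7 : (1 + |b|) ^ 2 * variance XS μ = 1 * variance XS μ := by
      rw [ha] at h; nlinarith
    have h8 : (1 + |b|) ^ 2 = 1 := mul_right_cancel₀ hVarS.ne' h7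
    have hb : |b| ≤ 0 := by nlinarith
    exact ⟨ha, abs_eq_zero.mp (le_antisymm hb h1)⟩
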